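/- arXiv:2405.01283 — 2 statements merged into one kernel-verified Lean document; each statement's English description precedes it below -/
import Mathlib

section
/- Let (X,d,μ) be a space of homogeneous type and let K be an ω-Calderón–Zygmund kernel on X satisfying the dual non-degeneracy condition with constants c₀, C̄. Then for each A ≥ 2A₀² + A₀ there exists ε_A > 0, with ε_A → 0 as A → ∞, such that for every ball B = B(y₀,r) there exists a ball B̃ = B(x₀,r) with: d(B,B̃) ≥ r; Ar ≤ d(x₀,y₀) < C̄Ar; |K(x₀,y₀)| ≈ 1/μ(B(y₀,Ar)) up to constants depending only on c₀, c_K, C_μ, A₀; ∫_B |K(x,y) − K(x₀,y₀)| dμ(y) ≲_{C_μ,A₀} ε_A μ(B)/μ(B(y₀,Ar)) for all x ∈ B̃; and ∫_{B̃} |K(x,y) − K(x₀,y₀)| dμ(x) ≲_{C_μ,A₀} ε_A μ(B̃)/μ(B(y₀,Ar)) for all y ∈ B. -/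
open MeasureTheory Filter Set
open scoped ENNReal NNReal

noncomputable section

namespace SHT

variable {X : Type*}

/-- The quasi-metric ball `B(x,r)`. -/
def qball (d : X → X → ℝ) (x : X) (r : ℝ) : Set X := {y | d x y < r}

/-- Open sets for the topology induced by a quasi-metric. -/
def dOpen (d : X → X → ℝ) (U : Set X) : Prop := ∀ x ∈ U, ∃ r > 0, qball d x r ⊆ U

/-- Closure of a set in the topology induced by a quasi-metric. -/
def dClosure (d : X → X → ℝ) (A : Set X) : Set X :=
  {x | ∀ U : Set X, dOpen d U → x ∈ U → (U ∩ A).Nonempty}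

/-- Support of a function: the closure of its non-vanishing set. -/
def qsupp (d : X → X → ℝ) (f : X → ℂ) : Set X := dClosure d {y | f y ≠ 0}

/-- `(X, d, μ)` is a space of homogeneous type with quasi-metric constant `A₀`
and doubling constant `Cμ`. -/
structure IsSHT [MeasurableSpace X] (d : X → X → ℝ) (μ : Measure X) (A₀ Cμ : ℝ) : Prop where
  one_le_A0 : 1 ≤ A₀
  symm : ∀ x y, d x y = d y x
  nonneg : ∀ x y, 0 ≤ d x y
  eq_zero_iff : ∀ x y, d x y = 0 ↔ x = y
  triangle : ∀ x y z, d x y ≤ A₀ * (d x z + d z y)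
  meas_ball : ∀ (x : X) (r : ℝ), MeasurableSet (qball d x r)
  ball_pos : ∀ (x : X) (r : ℝ), 0 < r → 0 < μ (qball d x r)
  ball_ne_top : ∀ (x : X) (r : ℝ), μ (qball d x r) < ∞
  one_le_Cmu : 1 ≤ Cμ
  doubling : ∀ (x : X) (r : ℝ), 0 < r →
    μ (qball d x (2 * r)) ≤ ENNReal.ofReal Cμ * μ (qball d x r)
  measure_univ : μ Set.univ = ∞
  null_singleton : ∀ x : X, μ {x} = 0

/-- An `ω`-Calderón–Zygmund kernel with size constant `cK`. -/
structure IsCZKernel [MeasurableSpace X] (d : X → X → ℝ) (μ : Measure X) (A₀ : ℝ)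
    (K : X → X → ℂ) (cK : ℝ) (ω : ℝ → ℝ) : Prop where
  size : ∀ x y, x ≠ y →
    ‖K x y‖ ≤ cK / (μ (qball d x (d x y))).toReal
  regularity : ∀ x x' y, x ≠ y → d x x' < (2 * A₀)⁻¹ * d x y →
    ‖K x y - K x' y‖ + ‖K y x - K y x'‖
      ≤ ω (d x x' / d x y) / (μ (qball d x (d x y))).toReal
  omega_cont : ContinuousOn ω (Set.Icc 0 1)
  omega_mono : MonotoneOn ω (Set.Icc 0 1)
  omega_nonneg : ∀ t ∈ Set.Icc (0:ℝ) 1, 0 ≤ ω t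
  omega_subadd : ∀ s t : ℝ, 0 ≤ s → 0 ≤ t → s + t ≤ 1 → ω (s + t) ≤ ω s + ω t
  omega_zero : ω 0 = 0

/-- The Dini condition `∫₀¹ ω(t) dt/t < ∞`. -/
def DiniCondition (ω : ℝ → ℝ) : Prop :=
  MeasureTheory.IntegrableOn (fun t => ω t / t) (Set.Ioo (0:ℝ) 1) MeasureTheory.volume

/-- Non-degeneracy of the kernel: for every `x` and `r > 0` there is
`y ∈ B(x, C̄ r) \ B(x,r)` with `|K(x,y)| ≥ 1/(c₀ μ(B(x,r)))`. -/
def NonDeg [MeasurableSpace X] (d : X → X → ℝ) (μ : Measure X) (K : X → X → ℂ)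
    (c₀ Cb : ℝ) : Prop :=
  ∀ (x : X) (r : ℝ), 0 < r → ∃ y ∈ qball d x (Cb * r) \ qball d x r,
    1 / (c₀ * (μ (qball d x r)).toReal) ≤ ‖K x y‖

/-- Dual non-degeneracy of the kernel: for every `y` and `r > 0` there is
`x ∈ B(y, C̄ r) \ B(y,r)` with `|K(x,y)| ≥ 1/(c₀ μ(B(y,r)))`. -/
def NonDegDual [MeasurableSpace X] (d : X → X → ℝ) (μ : Measure X) (K : X → X → ℂ)
    (c₀ Cb : ℝ) : Prop :=
  ∀ (y : X) (r : ℝ), 0 < r → ∃ x ∈ qball d y (Cb * r) \ qball d y r,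
    1 / (c₀ * (μ (qball d y r)).toReal) ≤ ‖K x y‖

/-- `w(E) = ∫_E w dμ`. -/
def wInt [MeasurableSpace X] (μ : Measure X) (w : X → ℝ) (E : Set X) : ℝ := ∫ x in E, w x ∂μ

/-- `w` is a positive, locally (on balls) integrable weight. -/
def IsWeight [MeasurableSpace X] (d : X → X → ℝ) (μ : Measure X) (w : X → ℝ) : Prop :=
  Measurable w ∧ (∀ x, 0 < w x) ∧
    ∀ (x : X) (r : ℝ), 0 < r → IntegrableOn w (qball d x r) μ

/-- `C` is an upper bound for the Muckenhoupt `A_p` characteristic `[w]_{A_p}`. -/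
def IsApBound [MeasurableSpace X] (d : X → X → ℝ) (μ : Measure X) (p : ℝ) (w : X → ℝ)
    (C : ℝ) : Prop :=
  ∀ (x : X) (r : ℝ), 0 < r →
    (∫ z in qball d x r, w z ∂μ) *
      (∫ z in qball d x r, (w z) ^ (-(1 / (p - 1))) ∂μ) ^ (p - 1)
      ≤ C * ((μ (qball d x r)).toReal) ^ p

/-- Conjugate exponent `p' = p/(p-1)`. -/
def conjExp (p : ℝ) : ℝ := p / (p - 1)

/-- Average `⟨b⟩_E` of a (complex-valued) function over a set. -/
def cavg [MeasurableSpace X] (μ : Measure X) (b : X → ℂ) (E : Set X) : ℂ :=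
  ((μ E).toReal)⁻¹ • ∫ x in E, b x ∂μ

/-- Oscillation `∫_E |b - ⟨b⟩_E| dμ`. -/
def osc [MeasurableSpace X] (μ : Measure X) (b : X → ℂ) (E : Set X) : ℝ :=
  ∫ x in E, ‖b x - cavg μ b E‖ ∂μ

/-- `N` is an upper bound for the weighted fractional BMO norm `‖b‖_{BMO_w^α}`,
where `Qd` is the upper dimension of the measure. -/
def BMOBound [MeasurableSpace X] (d : X → X → ℝ) (μ : Measure X) (w : X → ℝ)
    (Qd α : ℝ) (b : X → ℂ) (N : ℝ) : Prop :=
  ∀ (x : X) (r : ℝ), 0 < r →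
    osc μ b (qball d x r)
      ≤ N * (wInt μ w (qball d x r)) ^ (α / Qd) * wInt μ w (qball d x r)

/-- Local integrability (integrability on all balls). -/
def LocInt [MeasurableSpace X] (d : X → X → ℝ) (μ : Measure X) (b : X → ℂ) : Prop :=
  Measurable b ∧ ∀ (x : X) (r : ℝ), 0 < r → IntegrableOn b (qball d x r) μ

/-- Bounded function. -/
def BddFun (f : X → ℂ) : Prop := ∃ M : ℝ, ∀ x, ‖f x‖ ≤ M

/-- Boundedly supported function. -/
def BddSupp (d : X → X → ℝ) (f : X → ℂ) : Prop :=
  ∃ (x : X) (r : ℝ), ∀ y, f y ≠ 0 → d x y < r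

/-- `L^∞_bs(X)`: bounded functions with bounded support. -/
def Linftybs (d : X → X → ℝ) : Set (X → ℂ) := {f | BddFun f ∧ BddSupp d f}

/-- `L¹_bs(X)`: integrable functions with bounded support. -/
def L1bs [MeasurableSpace X] (d : X → X → ℝ) (μ : Measure X) : Set (X → ℂ) :=
  {f | Integrable f μ ∧ BddSupp d f}

/-- `L^∞(E)`: bounded functions vanishing outside `E`. -/
def MemLinfty (f : X → ℂ) (E : Set X) : Prop := BddFun f ∧ ∀ x ∉ E, f x = 0

/-- `L^∞₀(E)`: bounded integrable functions vanishing outside `E` with mean zero. -/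
def MemLinfty0 [MeasurableSpace X] (μ : Measure X) (f : X → ℂ) (E : Set X) : Prop :=
  MemLinfty f E ∧ Integrable f μ ∧ (∫ x, f x ∂μ) = 0

/-- Supremum norm of a complex-valued function. -/
def supNorm (f : X → ℂ) : ℝ := ⨆ x, ‖f x‖

/-- Supremum norm of a real-valued function. -/
def supNormR (g : X → ℝ) : ℝ := ⨆ x, |g x|

/-- `T ∈ SIO(K, 𝓕)`: on `𝓕`, `T` is represented by the kernel `K` off the support. -/
def SIO [MeasurableSpace X] (d : X → X → ℝ) (μ : Measure X) (K : X → X → ℂ)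
    (F : Set (X → ℂ)) (T : (X → ℂ) → X → ℂ) : Prop :=
  ∀ f ∈ F, ∀ x ∉ qsupp d f, T f x = ∫ y, K x y * f y ∂μ

/-- A Calderón–Zygmund operator: bounded on `L²` and represented by the kernel off
the support (for `f` in `L²` or in `L¹`). -/
structure IsCZO [MeasurableSpace X] (d : X → X → ℝ) (μ : Measure X) (K : X → X → ℂ)
    (T : (X → ℂ) → X → ℂ) : Prop where
  bddL2 : ∃ M : ℝ≥0∞, ∀ f : X → ℂ, MemLp f 2 μ →
    MemLp (T f) 2 μ ∧ eLpNorm (T f) 2 μ ≤ M * eLpNorm f 2 μ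
  repr : ∀ f : X → ℂ, (MemLp f 2 μ ∨ Integrable f μ) →
    ∀ x ∉ qsupp d f, T f x = ∫ y, K x y * f y ∂μ

/-- The commutator `[b,T]f = b · Tf − T(bf)`. -/
def commut (b : X → ℂ) (T : (X → ℂ) → X → ℂ) (f : X → ℂ) : X → ℂ :=
  fun x => b x * T f x - T (fun y => b y * f y) x

/-- Weighted `L^p` norm `‖f‖_{L^p_w} = (∫ |f w|^p dμ)^{1/p}` (valued in `ℝ≥0∞`). -/
def wLpNorm [MeasurableSpace X] (μ : Measure X) (p : ℝ) (w : X → ℝ) (f : X → ℂ) : ℝ≥0∞ :=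
  (∫⁻ x, ENNReal.ofReal (‖f x‖ * w x) ^ p ∂μ) ^ (1 / p)

/-- Weighted `L^q` norm of an `ℝ≥0∞`-valued function. -/
def wLqNormE [MeasurableSpace X] (μ : Measure X) (q : ℝ) (w : X → ℝ) (g : X → ℝ≥0∞) : ℝ≥0∞ :=
  (∫⁻ x, (g x * ENNReal.ofReal (w x)) ^ q ∂μ) ^ (1 / q)

/-- A system of dyadic cubes on `X`. -/
structure DyadicSystem [MeasurableSpace X] (d : X → X → ℝ) where
  δ : ℝ
  a1 : ℝ
  A1 : ℝ
  δ_pos : 0 < δ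
  δ_lt_one : δ < 1
  a1_pos : 0 < a1
  a1_le_A1 : a1 ≤ A1
  cubes : ℤ → Set (Set X)
  countable : ∀ k, (cubes k).Countable
  meas : ∀ k, ∀ Q ∈ cubes k, MeasurableSet Q
  cover : ∀ k, ⋃₀ cubes k = Set.univ
  pdisj : ∀ k, (cubes k).PairwiseDisjoint id
  nested : ∀ k l : ℤ, k ≤ l → ∀ Q ∈ cubes k, ∀ R ∈ cubes l, R ⊆ Q ∨ Disjoint Q R
  center : ∀ k : ℤ, ∀ Q ∈ cubes k, ∃ x : X,
    qball d x (a1 * δ ^ k) ⊆ Q ∧ Q ⊆ qball d x (A1 * δ ^ k)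

/-- An `η`-sparse family of dyadic cubes. -/
structure SparseFamily [MeasurableSpace X] (d : X → X → ℝ) (μ : Measure X)
    (D : DyadicSystem d) (η : ℝ) where
  S : Set (Set X)
  mem_dyadic : ∀ Q ∈ S, ∃ k, Q ∈ D.cubes k
  E : Set X → Set X
  E_sub : ∀ Q ∈ S, E Q ⊆ Q
  E_meas : ∀ Q ∈ S, MeasurableSet (E Q)
  E_dense : ∀ Q ∈ S, ENNReal.ofReal η * μ Q ≤ μ (E Q)
  overlap : ∃ N : ℕ, ∀ x : X, ∀ F : Finset (Set X),
    (↑F : Set (Set X)) ⊆ S → (∀ Q ∈ F, x ∈ E Q) → F.card ≤ N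

/-- Average of `|f|` over `P` (valued in `ℝ≥0∞`). -/
def avgAbs [MeasurableSpace X] (μ : Measure X) (f : X → ℂ) (P : Set X) : ℝ≥0∞ :=
  (∫⁻ x in P, ENNReal.ofReal (‖f x‖) ∂μ) / μ P

/-- The coefficient `l₁^p(P)^{1/p} l₂^{-q'}(P)^{1/q'} / μ(P)` of the two-weight
fractional sparse operator. -/
def sparseCoef [MeasurableSpace X] (μ : Measure X) (p q : ℝ) (l₁ l₂ : X → ℝ)
    (P : Set X) : ℝ≥0∞ :=
  (∫⁻ x in P, ENNReal.ofReal ((l₁ x) ^ p) ∂μ) ^ (1 / p)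
    * (∫⁻ x in P, ENNReal.ofReal ((l₂ x) ^ (-(conjExp q))) ∂μ) ^ (1 / conjExp q) / μ P

/-- The two-weight fractional sparse operator `𝒜^{p,q}_{l₁,l₂}(f;𝒮)`. -/
def sparseOp [MeasurableSpace X] (μ : Measure X) (p q : ℝ) (l₁ l₂ : X → ℝ)
    (S : Set (Set X)) (f : X → ℂ) (x : X) : ℝ≥0∞ :=
  ∑' P : S, Set.indicator (P : Set X)
    (fun _ => sparseCoef μ p q l₁ l₂ (P : Set X) * avgAbs μ f (P : Set X)) x

/-- The sparse operator `𝒜_{b,𝒮} f(x) = Σ_{Q∈𝒮} |b(x) − ⟨b⟩_Q| ⟨|f|⟩_Q χ_Q(x)`. -/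
def Asparse [MeasurableSpace X] (μ : Measure X) (b : X → ℂ) (S : Set (Set X))
    (f : X → ℂ) (x : X) : ℝ≥0∞ :=
  ∑' P : S, Set.indicator (P : Set X)
    (fun z => ENNReal.ofReal (‖b z - cavg μ b (P : Set X)‖)
      * avgAbs μ f (P : Set X)) x

/-- The sparse operator `𝒜*_{b,𝒮} f(x) = Σ_{Q∈𝒮} ⟨|b − ⟨b⟩_Q| |f|⟩_Q χ_Q(x)`. -/
def AsparseStar [MeasurableSpace X] (μ : Measure X) (b : X → ℂ) (S : Set (Set X))
    (f : X → ℂ) (x : X) : ℝ≥0∞ :=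
  ∑' P : S, Set.indicator (P : Set X)
    (fun _ => (∫⁻ z in (P : Set X),
        ENNReal.ofReal (‖b z - cavg μ b (P : Set X)‖ * ‖f z‖) ∂μ)
      / μ (P : Set X)) x

/-- An admissible sextuple `(K, ξ, A, ε, B, B̃)` with `B = B(y₀,r)`, `B̃ = B(x₀,r)`. -/
structure Admissible [MeasurableSpace X] (d : X → X → ℝ) (μ : Measure X) (A₀ : ℝ)
    (K : X → X → ℂ) (ξ A ε r : ℝ) (y₀ x₀ : X) : Prop where
  r_pos : 0 < r
  xi_ge_one : 1 ≤ ξ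
  A_ge : 2 * A₀ ^ 2 + A₀ ≤ A
  eps_pos : 0 < ε
  sep : ∀ y ∈ qball d y₀ r, ∀ x ∈ qball d x₀ r, r ≤ d y x
  dist_lb : A * r ≤ d x₀ y₀
  dist_ub : d x₀ y₀ ≤ ξ * A * r
  K_ub : ‖K x₀ y₀‖ ≤ ξ / (μ (qball d y₀ (A * r))).toReal
  K_lb : 1 / (μ (qball d y₀ (A * r))).toReal ≤ ξ * ‖K x₀ y₀‖
  int_y : ∀ x ∈ qball d x₀ r,
    ∫⁻ y in qball d y₀ r, ENNReal.ofReal (‖K x y - K x₀ y₀‖) ∂μ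
      ≤ ENNReal.ofReal (ξ * ε) * μ (qball d y₀ r) / μ (qball d y₀ (A * r))
  int_x : ∀ y ∈ qball d y₀ r,
    ∫⁻ x in qball d x₀ r, ENNReal.ofReal (‖K x y - K x₀ y₀‖) ∂μ
      ≤ ENNReal.ofReal (ξ * ε) * μ (qball d x₀ r) / μ (qball d y₀ (A * r))



section Aux

variable {X : Type*} [MeasurableSpace X] {d : X → X → ℝ} {μ : MeasureTheory.Measure X}
  {A₀ Cμ : ℝ}

lemma aux_qball_mono (d : X → X → ℝ) (x : X) {r s : ℝ} (h : r ≤ s) :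
    qball d x r ⊆ qball d x s := fun _ hy => lt_of_lt_of_le hy h

lemma aux_doubling_pow (hX : IsSHT d μ A₀ Cμ) (x : X) {t : ℝ} (ht : 0 < t) (n : ℕ) :
    μ (qball d x (2 ^ n * t)) ≤ ENNReal.ofReal Cμ ^ n * μ (qball d x t) := by
  induction n with
  | zero => simp
  | succ n ih =>
    have h1 : (2:ℝ) ^ (n + 1) * t = 2 * (2 ^ n * t) := by ring
    have h2 : (0:ℝ) < 2 ^ n * t := by positivity
    calc μ (qball d x (2 ^ (n + 1) * t)) = μ (qball d x (2 * (2 ^ n * t))) := by rw [h1]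
      _ ≤ ENNReal.ofReal Cμ * μ (qball d x (2 ^ n * t)) := hX.doubling x _ h2
      _ ≤ ENNReal.ofReal Cμ * (ENNReal.ofReal Cμ ^ n * μ (qball d x t)) :=
          mul_le_mul_right ih _
      _ = ENNReal.ofReal Cμ ^ (n + 1) * μ (qball d x t) := by ring

lemma aux_measure_toReal_le (hX : IsSHT d μ A₀ Cμ) {B : Set X} (x : X) {s : ℝ}
    (hs : 0 < s) (n : ℕ) (hsub : B ⊆ qball d x (2 ^ n * s)) :
    (μ B).toReal ≤ Cμ ^ n * (μ (qball d x s)).toReal := by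
  have hle : μ B ≤ ENNReal.ofReal Cμ ^ n * μ (qball d x s) :=
    (measure_mono hsub).trans (aux_doubling_pow hX x hs n)
  have hne : ENNReal.ofReal Cμ ^ n * μ (qball d x s) ≠ ⊤ :=
    ENNReal.mul_ne_top (ENNReal.pow_ne_top ENNReal.ofReal_ne_top) (hX.ball_ne_top x s).ne
  have h2 := ENNReal.toReal_mono hne hle
  rwa [ENNReal.toReal_mul, ENNReal.toReal_pow,
    ENNReal.toReal_ofReal (by linarith [hX.one_le_Cmu])] at h2

/-- The `ε A` function used in `stmt12`. -/
def epsFun (ω : ℝ → ℝ) (A₀ : ℝ) : ℝ → ℝ :=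
  fun A => ω (min (max (A₀ / (A - A₀)) 0) ((2 * A₀)⁻¹)) + min (max A⁻¹ 0) 1

end Aux

end SHT

open SHT
/-- Proposition 4.6 of the paper: properties of a kernel satisfying
the dual non-degeneracy condition. -/
theorem stmt12 {X : Type*} [MeasurableSpace X]
    (d : X → X → ℝ) (μ : MeasureTheory.Measure X) (A₀ Cμ : ℝ)
    (hX : IsSHT d μ A₀ Cμ)
    (K : X → X → ℂ) (cK : ℝ) (ω : ℝ → ℝ)
    (hK : IsCZKernel d μ A₀ K cK ω)
    (c₀ Cb : ℝ) (hc₀ : 0 < c₀) (hCb : 0 < Cb)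
    (hnd : NonDegDual d μ K c₀ Cb) :
    ∃ (ε : ℝ → ℝ) (c₁ c₂ c₃ : ℝ), 0 < c₁ ∧ 0 < c₂ ∧ 0 < c₃ ∧
      Filter.Tendsto ε Filter.atTop (nhds 0) ∧
      ∀ A : ℝ, 2 * A₀ ^ 2 + A₀ ≤ A → 0 < ε A ∧
        ∀ (y₀ : X) (r : ℝ), 0 < r → ∃ x₀ : X,
          (∀ y ∈ qball d y₀ r, ∀ x ∈ qball d x₀ r, r ≤ d y x) ∧
          A * r ≤ d x₀ y₀ ∧ d x₀ y₀ < Cb * A * r ∧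
          c₁ / (μ (qball d y₀ (A * r))).toReal ≤ ‖K x₀ y₀‖ ∧
          ‖K x₀ y₀‖ ≤ c₂ / (μ (qball d y₀ (A * r))).toReal ∧
          (∀ x ∈ qball d x₀ r,
            ∫⁻ y in qball d y₀ r, ENNReal.ofReal (‖K x y - K x₀ y₀‖) ∂μ
              ≤ ENNReal.ofReal (c₃ * ε A) * μ (qball d y₀ r) / μ (qball d y₀ (A * r))) ∧
          (∀ y ∈ qball d y₀ r,
            ∫⁻ x in qball d x₀ r, ENNReal.ofReal (‖K x y - K x₀ y₀‖) ∂μ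
              ≤ ENNReal.ofReal (c₃ * ε A) * μ (qball d x₀ r) / μ (qball d y₀ (A * r))) := by
  classical
  obtain ⟨N, hN'⟩ := pow_unbounded_of_one_lt (R := ℝ) (2 * A₀ ^ 2 * (Cb + 1)) one_lt_two
  have hN : 2 * A₀ ^ 2 * (Cb + 1) ≤ 2 ^ N := hN'.le
  have hA0 : 1 ≤ A₀ := hX.one_le_A0
  have hA0pos : (0:ℝ) < A₀ := by linarith
  have hA0sq : A₀ ≤ A₀ * A₀ := by nlinarith
  have hCμ : 1 ≤ Cμ := hX.one_le_Cmu
  have hCμpow : (0:ℝ) < Cμ ^ N := by positivity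
  have h2N : 2 * A₀ ≤ 2 ^ N := by
    have hq : (0:ℝ) ≤ A₀ * A₀ * Cb := mul_nonneg (mul_pos hA0pos hA0pos).le hCb.le
    linarith [hN, hA0sq]
  refine ⟨epsFun ω A₀, 1 / c₀, max cK 1 * Cμ ^ N, Cμ ^ N + 1, by positivity,
    mul_pos (lt_of_lt_of_le one_pos (le_max_right _ _)) hCμpow, by positivity, ?_, ?_⟩
  · -- Tendsto
    have h1 : Filter.Tendsto (fun A : ℝ => A₀ / (A - A₀)) Filter.atTop (nhds 0) := by
      have ht : Filter.Tendsto (fun A : ℝ => A - A₀) Filter.atTop Filter.atTop := by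
        simpa [sub_eq_add_neg] using
          tendsto_atTop_add_const_right Filter.atTop (-A₀) (tendsto_id (α := ℝ))
      have h2 := ht.inv_tendsto_atTop
      have h3 := h2.const_mul A₀
      simpa [div_eq_mul_inv, Function.comp] using h3
    have hg : Filter.Tendsto (fun A : ℝ => min (max (A₀ / (A - A₀)) 0) ((2 * A₀)⁻¹))
        Filter.atTop (nhds 0) := by
      have h4 := (h1.max (tendsto_const_nhds (x := (0:ℝ)))).min
        (tendsto_const_nhds (x := ((2 * A₀)⁻¹ : ℝ)))
      have e : ((0:ℝ) ⊔ 0) ⊓ ((2 * A₀)⁻¹) = 0 := by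
        rw [sup_idem]
        exact inf_eq_left.mpr (by positivity)
      rw [e] at h4
      exact h4
    have hgmem : ∀ A : ℝ, min (max (A₀ / (A - A₀)) 0) ((2 * A₀)⁻¹) ∈ Set.Icc (0:ℝ) 1 := by
      intro A
      constructor
      · exact le_min (le_max_right _ _) (by positivity)
      · exact le_trans (min_le_right _ _) (inv_le_one_of_one_le₀ (by linarith))
    have hωg : Filter.Tendsto
        (fun A : ℝ => ω (min (max (A₀ / (A - A₀)) 0) ((2 * A₀)⁻¹)))
        Filter.atTop (nhds 0) := by
      have hgt := tendsto_nhdsWithin_of_tendsto_nhds_of_eventually_within _ hg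
        (Filter.Eventually.of_forall hgmem)
      have hc := (hK.omega_cont 0 ⟨le_refl 0, zero_le_one⟩).tendsto.comp hgt
      rwa [hK.omega_zero] at hc
    have h2 : Filter.Tendsto (fun A : ℝ => min (max A⁻¹ 0) 1) Filter.atTop (nhds 0) := by
      have h5 := ((tendsto_inv_atTop_zero (𝕜 := ℝ)).max
        (tendsto_const_nhds (x := (0:ℝ)))).min (tendsto_const_nhds (x := (1:ℝ)))
      have e : ((0:ℝ) ⊔ 0) ⊓ (1:ℝ) = 0 := by
        rw [sup_idem]; exact inf_eq_left.mpr zero_le_one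
      rw [e] at h5
      exact h5
    have h6 := hωg.add h2
    rw [add_zero] at h6
    exact h6
  · -- main part
    intro A hA
    have hA3 : (3:ℝ) ≤ A := by linarith [hA0sq]
    have hApos : (0:ℝ) < A := by linarith
    have hAA : 2 * A₀ ^ 2 ≤ A - A₀ := by linarith
    have hAApos : (0:ℝ) < A - A₀ := by linarith [hA0sq]
    have h2A₀A : 2 * A₀ ≤ A := by linarith [hA0sq]
    have hgA : min (max (A₀ / (A - A₀)) 0) ((2 * A₀)⁻¹) = A₀ / (A - A₀) := by
      rw [max_eq_left (div_nonneg hA0pos.le hAApos.le)]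
      refine min_eq_left ?_
      rw [inv_eq_one_div, div_le_div_iff₀ hAApos (by linarith)]
      linarith [hAA]
    have hεA : epsFun ω A₀ A = ω (A₀ / (A - A₀)) + min (max A⁻¹ 0) 1 := by
      rw [epsFun, hgA]
    have hfrac_mem : A₀ / (A - A₀) ∈ Set.Icc (0:ℝ) 1 := by
      constructor
      · exact div_nonneg hA0pos.le hAApos.le
      · rw [div_le_one hAApos]; linarith [hA0sq]
    have hωAnn : 0 ≤ ω (A₀ / (A - A₀)) := hK.omega_nonneg _ hfrac_mem
    have hminpos : 0 < min (max A⁻¹ 0) 1 :=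
      lt_min (lt_of_lt_of_le (by positivity) (le_max_left _ _)) one_pos
    have hεpos : 0 < epsFun ω A₀ A := by rw [hεA]; linarith
    have hωε : ω (A₀ / (A - A₀)) ≤ epsFun ω A₀ A := by rw [hεA]; linarith
    refine ⟨hεpos, ?_⟩
    intro y₀ r hr
    have hArpos : 0 < A * r := by positivity
    obtain ⟨x₀, hx₀mem, hx₀K⟩ := hnd y₀ (A * r) hArpos
    obtain ⟨hx₀lt, hx₀ge'⟩ := hx₀mem
    have hx₀lt : d y₀ x₀ < Cb * (A * r) := hx₀lt
    have hx₀ge : A * r ≤ d y₀ x₀ := not_lt.mp hx₀ge'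
    have hsy : d x₀ y₀ = d y₀ x₀ := hX.symm x₀ y₀
    have hμBA_pos : 0 < μ (qball d y₀ (A * r)) := hX.ball_pos _ _ hArpos
    have hμBA_ne : μ (qball d y₀ (A * r)) ≠ ⊤ := (hX.ball_ne_top _ _).ne
    set m := (μ (qball d y₀ (A * r))).toReal with hm_def
    have hm : 0 < m := ENNReal.toReal_pos hμBA_pos.ne' hμBA_ne
    have hD : A * r ≤ d x₀ y₀ := by rw [hsy]; exact hx₀ge
    have hDub : d x₀ y₀ < Cb * A * r := by rw [hsy, mul_assoc]; exact hx₀lt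
    have hDpos : 0 < d x₀ y₀ := lt_of_lt_of_le hArpos hD
    refine ⟨x₀, ?_, hD, hDub, ?_, ?_, ?_, ?_⟩
    · -- separation
      intro y hy x hx
      have hy : d y₀ y < r := hy
      have hx : d x₀ x < r := hx
      have t1 : d y₀ x₀ ≤ A₀ * (d y₀ y + d y x₀) := hX.triangle y₀ x₀ y
      have t2 : d y x₀ ≤ A₀ * (d y x + d x₀ x) := by
        have t := hX.triangle y x₀ x
        rwa [hX.symm x x₀] at t
      have c1 := mul_le_mul_of_nonneg_left t2 hA0pos.le
      have c2 := mul_le_mul_of_nonneg_right hA hr.le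
      have c3 := mul_lt_mul_of_pos_left hy hA0pos
      have c4 := mul_lt_mul_of_pos_left hx (mul_pos hA0pos hA0pos)
      have hstep : A₀ * A₀ * r ≤ A₀ * A₀ * d y x := by
        linarith [t1, c1, c2, c3, c4, hx₀ge]
      exact le_of_mul_le_mul_left hstep (mul_pos hA0pos hA0pos)
    · -- lower bound on |K|
      rw [div_div]
      exact hx₀K
    · -- upper bound on |K|
      have hne : x₀ ≠ y₀ := by
        intro h
        have := (hX.eq_zero_iff x₀ y₀).mpr h
        linarith
      have hsize := hK.size x₀ y₀ hne
      set V := (μ (qball d x₀ (d x₀ y₀))).toReal with hV_def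
      have hVpos : 0 < V :=
        ENNReal.toReal_pos (hX.ball_pos _ _ hDpos).ne' (hX.ball_ne_top _ _).ne
      have hsub : qball d y₀ (A * r) ⊆ qball d x₀ (2 ^ N * d x₀ y₀) := by
        intro z hz
        have hz : d y₀ z < A * r := hz
        have t := hX.triangle x₀ z y₀
        have p1 := mul_lt_mul_of_pos_left hz hA0pos
        have p2 := mul_le_mul_of_nonneg_left hD hA0pos.le
        have p3 := mul_le_mul_of_nonneg_right h2N hDpos.le
        show d x₀ z < 2 ^ N * d x₀ y₀
        linarith [t, p1, p2, p3]
      have hmV : m ≤ Cμ ^ N * V := aux_measure_toReal_le hX x₀ hDpos N hsub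
      have hcK : ‖K x₀ y₀‖ ≤ max cK 1 / V := by
        refine hsize.trans ?_
        gcongr
        exact le_max_left _ _
      refine hcK.trans ?_
      rw [div_le_div_iff₀ hVpos hm]
      have hmax : (0:ℝ) < max cK 1 := lt_of_lt_of_le one_pos (le_max_right _ _)
      linarith [mul_le_mul_of_nonneg_left hmV hmax.le]
    all_goals {
    -- the two integral bounds; first establish the pointwise bound
    have key : ∀ x ∈ qball d x₀ r, ∀ y ∈ qball d y₀ r,
        ‖K x y - K x₀ y₀‖ ≤ (Cμ ^ N + 1) * epsFun ω A₀ A / m := by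
      intro x hx y hy
      have hx : d x₀ x < r := hx
      have hy : d y₀ y < r := hy
      -- lower bound for d x₀ y
      have ht : d x₀ y₀ ≤ A₀ * (d x₀ y + d y₀ y) := by
        have t := hX.triangle x₀ y₀ y
        rwa [hX.symm y y₀] at t
      have hAlb : (A - A₀) * r < A₀ * d x₀ y := by
        have p1 := mul_lt_mul_of_pos_left hy hA0pos
        linarith [ht, hD, p1]
      have hxy_pos : 0 < d x₀ y := by
        rcases lt_or_ge 0 (d x₀ y) with h | h
        · exact h
        · exfalso
          have h2 := mul_nonpos_of_nonneg_of_nonpos hA0pos.le h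
          have h3 := mul_pos hAApos hr
          linarith [hAlb]
      have hxy_lb : 2 * A₀ * r < d x₀ y := by
        have hstep : A₀ * (2 * A₀ * r) < A₀ * d x₀ y := by
          have h1 := mul_le_mul_of_nonneg_right hAA hr.le
          linarith [hAlb]
        exact lt_of_mul_lt_mul_left hstep hA0pos.le
      have hne1 : x₀ ≠ y := by
        intro h
        have := (hX.eq_zero_iff x₀ y).mpr h
        linarith
      have hcond1 : d x₀ x < (2 * A₀)⁻¹ * d x₀ y := by
        rw [inv_mul_eq_div, lt_div_iff₀ (by linarith)]
        have h1 := mul_lt_mul_of_pos_right hx (show (0:ℝ) < 2 * A₀ by linarith)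
        linarith [hxy_lb]
      have reg1 := hK.regularity x₀ x y hne1 hcond1
      set V₁ := (μ (qball d x₀ (d x₀ y))).toReal with hV₁_def
      have hV₁pos : 0 < V₁ :=
        ENNReal.toReal_pos (hX.ball_pos _ _ hxy_pos).ne' (hX.ball_ne_top _ _).ne
      have termA : ‖K x y - K x₀ y‖ ≤ ω (d x₀ x / d x₀ y) / V₁ := by
        rw [norm_sub_rev]
        exact le_trans (le_add_of_nonneg_right (norm_nonneg _)) reg1
      have hrat1_nn : 0 ≤ d x₀ x / d x₀ y := div_nonneg (hX.nonneg _ _) hxy_pos.le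
      have hrat1_le : d x₀ x / d x₀ y ≤ A₀ / (A - A₀) := by
        rw [div_le_div_iff₀ hxy_pos hAApos]
        have h1 := mul_lt_mul_of_pos_right hx hAApos
        linarith [hAlb]
      have hω1 : ω (d x₀ x / d x₀ y) ≤ ω (A₀ / (A - A₀)) :=
        hK.omega_mono ⟨hrat1_nn, le_trans hrat1_le hfrac_mem.2⟩ hfrac_mem hrat1_le
      -- compare V₁ with m
      have hxy_lb2 : A * r < 2 * A₀ * d x₀ y := by
        have h1 := mul_le_mul_of_nonneg_right (show A ≤ 2 * (A - A₀) by linarith) hr.le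
        linarith [hAlb]
      have hsub1 : qball d y₀ (A * r) ⊆ qball d x₀ (2 ^ N * d x₀ y) := by
        intro z hz
        have hz : d y₀ z < A * r := hz
        have t := hX.triangle x₀ z y₀
        have q1 := mul_lt_mul_of_pos_left hz hA0pos
        have q2 := mul_lt_mul_of_pos_left hDub hA0pos
        have q3 := mul_lt_mul_of_pos_left hxy_lb2
          (show (0:ℝ) < A₀ * (Cb + 1) by positivity)
        have q4 := mul_le_mul_of_nonneg_right hN hxy_pos.le
        show d x₀ z < 2 ^ N * d x₀ y
        linarith [t, q1, q2, q3, q4]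
      have hmV₁ : m ≤ Cμ ^ N * V₁ := aux_measure_toReal_le hX x₀ hxy_pos N hsub1
      have htermA : ‖K x y - K x₀ y‖ ≤ Cμ ^ N * ω (A₀ / (A - A₀)) / m := by
        refine termA.trans ?_
        refine le_trans (by gcongr) (?_ : ω (A₀ / (A - A₀)) / V₁ ≤ _)
        rw [div_le_div_iff₀ hV₁pos hm]
        linarith [mul_le_mul_of_nonneg_left hmV₁ hωAnn]
      -- term B
      have hyx₀pos : 0 < d y₀ x₀ := lt_of_lt_of_le hArpos hx₀ge
      have hne2 : y₀ ≠ x₀ := by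
        intro h
        have := (hX.eq_zero_iff y₀ x₀).mpr h
        linarith
      have hcond2 : d y₀ y < (2 * A₀)⁻¹ * d y₀ x₀ := by
        rw [inv_mul_eq_div, lt_div_iff₀ (by linarith)]
        have q1 := mul_lt_mul_of_pos_right hy (show (0:ℝ) < 2 * A₀ by linarith)
        have q2 := mul_le_mul_of_nonneg_right h2A₀A hr.le
        linarith [hx₀ge]
      have reg2 := hK.regularity y₀ y x₀ hne2 hcond2
      set V₂ := (μ (qball d y₀ (d y₀ x₀))).toReal with hV₂_def
      have termB : ‖K x₀ y - K x₀ y₀‖ ≤ ω (d y₀ y / d y₀ x₀) / V₂ := by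
        rw [norm_sub_rev]
        exact le_trans (le_add_of_nonneg_left (norm_nonneg _)) reg2
      have hrat2_nn : 0 ≤ d y₀ y / d y₀ x₀ := div_nonneg (hX.nonneg _ _) hyx₀pos.le
      have hrat2_le : d y₀ y / d y₀ x₀ ≤ A₀ / (A - A₀) := by
        rw [div_le_div_iff₀ hyx₀pos hAApos]
        have q1 := mul_lt_mul_of_pos_right hy hAApos
        have q2 := mul_nonneg hr.le hA0pos.le
        have q3 := mul_nonneg (sub_nonneg.mpr hA0) (hX.nonneg y₀ x₀)
        linarith [hx₀ge]
      have hω2 : ω (d y₀ y / d y₀ x₀) ≤ ω (A₀ / (A - A₀)) :=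
        hK.omega_mono ⟨hrat2_nn, le_trans hrat2_le hfrac_mem.2⟩ hfrac_mem hrat2_le
      have hmV₂ : m ≤ V₂ :=
        ENNReal.toReal_mono (hX.ball_ne_top _ _).ne
          (measure_mono (aux_qball_mono d y₀ hx₀ge))
      have hV₂pos : 0 < V₂ := lt_of_lt_of_le hm hmV₂
      have htermB : ‖K x₀ y - K x₀ y₀‖ ≤ ω (A₀ / (A - A₀)) / m := by
        refine termB.trans ?_
        refine le_trans (by gcongr) (?_ : ω (A₀ / (A - A₀)) / V₂ ≤ _)
        gcongr
      -- combine
      have htri := dist_triangle (K x y) (K x₀ y) (K x₀ y₀)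
      rw [dist_eq_norm, dist_eq_norm, dist_eq_norm] at htri
      refine htri.trans ?_
      have hsum : Cμ ^ N * ω (A₀ / (A - A₀)) / m + ω (A₀ / (A - A₀)) / m
          = (Cμ ^ N + 1) * ω (A₀ / (A - A₀)) / m := by ring
      refine le_trans (add_le_add htermA htermB) ?_
      rw [hsum]
      gcongr
    intro z hz
    have hmeas₁ := hX.meas_ball y₀ r
    have hmeas₂ := hX.meas_ball x₀ r
    have hconv : ENNReal.ofReal ((Cμ ^ N + 1) * epsFun ω A₀ A / m)
        = ENNReal.ofReal ((Cμ ^ N + 1) * epsFun ω A₀ A) / μ (qball d y₀ (A * r)) := by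
      rw [ENNReal.ofReal_div_of_pos hm, hm_def, ENNReal.ofReal_toReal hμBA_ne]
    first
    | calc ∫⁻ y in qball d y₀ r, ENNReal.ofReal (‖K z y - K x₀ y₀‖) ∂μ
          ≤ ∫⁻ _y in qball d y₀ r,
              ENNReal.ofReal ((Cμ ^ N + 1) * epsFun ω A₀ A / m) ∂μ :=
            setLIntegral_mono' hmeas₁ fun y hy =>
              ENNReal.ofReal_le_ofReal (key z hz y hy)
        _ = ENNReal.ofReal ((Cμ ^ N + 1) * epsFun ω A₀ A / m) * μ (qball d y₀ r) :=
            setLIntegral_const _ _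
        _ = ENNReal.ofReal ((Cμ ^ N + 1) * epsFun ω A₀ A) * μ (qball d y₀ r)
              / μ (qball d y₀ (A * r)) := by
            rw [hconv, div_eq_mul_inv, div_eq_mul_inv, mul_right_comm]
    | calc ∫⁻ x in qball d x₀ r, ENNReal.ofReal (‖K x z - K x₀ y₀‖) ∂μ
          ≤ ∫⁻ _x in qball d x₀ r,
              ENNReal.ofReal ((Cμ ^ N + 1) * epsFun ω A₀ A / m) ∂μ :=
            setLIntegral_mono' hmeas₂ fun x hx =>
              ENNReal.ofReal_le_ofReal (key x hx z hz)
        _ = ENNReal.ofReal ((Cμ ^ N + 1) * epsFun ω A₀ A / m) * μ (qball d x₀ r) :=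
            setLIntegral_const _ _
        _ = ENNReal.ofReal ((Cμ ^ N + 1) * epsFun ω A₀ A) * μ (qball d x₀ r)
              / μ (qball d y₀ (A * r)) := by
            rw [hconv, div_eq_mul_inv, div_eq_mul_inv, mul_right_comm]
    }
end
end

section
/- Let (X,d,μ) be a space of homogeneous type and let K be an ω-Calderón–Zygmund kernel on X. If the sextuple (K, ξ, A, ε, B, B̃) is admissible, then (K*, ξ*, A, ε, B̃, B) is admissible, where ξ* := ξ C_μ (A₀(1+ξ))^Q and K*(x,y) := K(y,x). -/
open MeasureTheory Filter Set
open scoped ENNReal NNReal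

noncomputable section

open SHT
section Aux

open SHT

variable {X : Type*} [MeasurableSpace X] {d : X → X → ℝ} {μ : MeasureTheory.Measure X}
  {A₀ Cμ : ℝ}

lemma doubling_iter (hX : IsSHT d μ A₀ Cμ) (c : X) (t : ℝ) (ht : 0 < t) (n : ℕ) :
    μ (qball d c ((2:ℝ) ^ n * t)) ≤ ENNReal.ofReal Cμ ^ n * μ (qball d c t) := by
  induction n with
  | zero => simp
  | succ n ih =>
    have h2 : (2:ℝ) ^ (n + 1) * t = 2 * ((2:ℝ) ^ n * t) := by ring
    rw [h2]
    calc μ (qball d c (2 * ((2:ℝ) ^ n * t)))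
        ≤ ENNReal.ofReal Cμ * μ (qball d c ((2:ℝ) ^ n * t)) :=
          hX.doubling c _ (by positivity)
      _ ≤ ENNReal.ofReal Cμ * (ENNReal.ofReal Cμ ^ n * μ (qball d c t)) := by
          exact mul_le_mul_right ih _
      _ = ENNReal.ofReal Cμ ^ (n + 1) * μ (qball d c t) := by ring

lemma ball_compare (hX : IsSHT d μ A₀ Cμ) {ξ : ℝ} (hξ : 1 ≤ ξ) (a b : X) {s : ℝ}
    (hs : 0 < s) (hd : d a b ≤ ξ * s) :
    μ (qball d b s)
      ≤ ENNReal.ofReal (Cμ * (A₀ * (1 + ξ)) ^ Real.logb 2 Cμ) * μ (qball d a s) := by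
  set lam : ℝ := A₀ * (1 + ξ) with hlam
  have hA0 : 1 ≤ A₀ := hX.one_le_A0
  have hlam2 : 2 ≤ lam := by nlinarith
  have hlam0 : 0 < lam := by linarith
  set n : ℕ := ⌈Real.logb 2 lam⌉₊ with hn
  have hlogl : 0 ≤ Real.logb 2 lam := Real.logb_nonneg one_lt_two (by linarith)
  have hlam_le : lam ≤ (2:ℝ) ^ n := by
    have h1 : lam = (2:ℝ) ^ (Real.logb 2 lam) :=
      (Real.rpow_logb two_pos (by norm_num) hlam0).symm
    have h2 : (2:ℝ) ^ (Real.logb 2 lam) ≤ (2:ℝ) ^ ((n:ℝ)) :=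
      Real.rpow_le_rpow_of_exponent_le one_le_two (Nat.le_ceil _)
    rw [h1]
    calc (2:ℝ) ^ (Real.logb 2 lam) ≤ (2:ℝ) ^ ((n:ℝ)) := h2
      _ = (2:ℝ) ^ n := by rw [Real.rpow_natCast]
  -- inclusion
  have hsub : qball d b s ⊆ qball d a ((2:ℝ) ^ n * s) := by
    intro z hz
    have hz' : d b z < s := hz
    have : d a z ≤ A₀ * (d a b + d b z) := hX.triangle a z b
    have hlt : d a z < lam * s := by
      have : d a z ≤ A₀ * (d a b + d b z) := hX.triangle a z b
      have h3 : d a b + d b z < ξ * s + s := by linarith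
      have hA0' : 0 < A₀ := by linarith
      nlinarith
    have : d a z < (2:ℝ) ^ n * s := lt_of_lt_of_le hlt (by nlinarith)
    exact this
  -- exponent comparison
  have hCμ1 : 1 ≤ Cμ := hX.one_le_Cmu
  have hCμ0 : 0 < Cμ := by linarith
  have hpow : Cμ ^ n ≤ Cμ * lam ^ Real.logb 2 Cμ := by
    have hn_le : (n:ℝ) ≤ Real.logb 2 lam + 1 := by
      have := Nat.ceil_lt_add_one hlogl
      linarith [this]
    have h1 : Cμ ^ n = Cμ ^ ((n:ℝ)) := by rw [Real.rpow_natCast]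
    have h2 : Cμ ^ ((n:ℝ)) ≤ Cμ ^ (Real.logb 2 lam + 1) :=
      Real.rpow_le_rpow_of_exponent_le hCμ1 hn_le
    have h3 : Cμ ^ (Real.logb 2 lam + 1) = Cμ ^ (Real.logb 2 lam) * Cμ := by
      rw [Real.rpow_add hCμ0, Real.rpow_one]
    have h4 : Cμ ^ (Real.logb 2 lam) = lam ^ Real.logb 2 Cμ := by
      have hc : Cμ = (2:ℝ) ^ (Real.logb 2 Cμ) :=
        (Real.rpow_logb two_pos (by norm_num) hCμ0).symm
      have hl : lam = (2:ℝ) ^ (Real.logb 2 lam) :=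
        (Real.rpow_logb two_pos (by norm_num) hlam0).symm
      conv_lhs => rw [hc]
      conv_rhs => rw [hl]
      rw [← Real.rpow_mul (by norm_num), ← Real.rpow_mul (by norm_num), mul_comm]
    rw [h1]
    calc Cμ ^ ((n:ℝ)) ≤ Cμ ^ (Real.logb 2 lam + 1) := h2
      _ = lam ^ Real.logb 2 Cμ * Cμ := by rw [h3, h4]
      _ = Cμ * lam ^ Real.logb 2 Cμ := mul_comm _ _
  calc μ (qball d b s) ≤ μ (qball d a ((2:ℝ) ^ n * s)) := measure_mono hsub
    _ ≤ ENNReal.ofReal Cμ ^ n * μ (qball d a s) := doubling_iter hX a s hs n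
    _ ≤ ENNReal.ofReal (Cμ * lam ^ Real.logb 2 Cμ) * μ (qball d a s) := by
        apply mul_le_mul_left
        rw [← ENNReal.ofReal_pow (le_of_lt hCμ0)]
        exact ENNReal.ofReal_le_ofReal hpow

end Aux
/-- admissibility of `(K,ξ,A,ε,B,B̃)` implies admissibility of
`(K*, ξ*, A, ε, B̃, B)` with `ξ* = ξ Cμ (A₀(1+ξ))^Q`. -/
theorem stmt15 {X : Type*} [MeasurableSpace X]
    (d : X → X → ℝ) (μ : MeasureTheory.Measure X) (A₀ Cμ : ℝ)
    (hX : IsSHT d μ A₀ Cμ)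
    (K : X → X → ℂ) (cK : ℝ) (ω : ℝ → ℝ)
    (hK : IsCZKernel d μ A₀ K cK ω)
    (ξ A ε r : ℝ) (y₀ x₀ : X)
    (hadm : Admissible d μ A₀ K ξ A ε r y₀ x₀) :
    Admissible d μ A₀ (fun x y => K y x)
      (ξ * Cμ * (A₀ * (1 + ξ)) ^ (Real.logb 2 Cμ)) A ε r x₀ y₀ := by
  have hξ := hadm.xi_ge_one
  have hr := hadm.r_pos
  have hA0 := hX.one_le_A0
  have hCμ1 := hX.one_le_Cmu
  have hCμ0 : (0:ℝ) < Cμ := by linarith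
  set lam : ℝ := A₀ * (1 + ξ) with hlam
  set Q : ℝ := Real.logb 2 Cμ with hQ
  have hQ0 : 0 ≤ Q := Real.logb_nonneg one_lt_two hCμ1
  have hlam1 : 1 ≤ lam := by nlinarith
  have hpowQ : 1 ≤ lam ^ Q := Real.one_le_rpow hlam1 hQ0
  set c : ℝ := Cμ * lam ^ Q with hc
  have hc1 : 1 ≤ c := by nlinarith
  have hc0 : 0 < c := by linarith
  have hAr : 0 < A * r := by nlinarith [hadm.A_ge, hX.one_le_A0]
  have hdub : d x₀ y₀ ≤ ξ * (A * r) := by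
    have := hadm.dist_ub; linarith [this]
  have hdub' : d y₀ x₀ ≤ ξ * (A * r) := by rw [hX.symm]; exact hdub
  have cmpx : μ (qball d x₀ (A * r)) ≤ ENNReal.ofReal c * μ (qball d y₀ (A * r)) :=
    ball_compare hX hξ y₀ x₀ hAr hdub'
  have cmpy : μ (qball d y₀ (A * r)) ≤ ENNReal.ofReal c * μ (qball d x₀ (A * r)) :=
    ball_compare hX hξ x₀ y₀ hAr hdub
  set Mx : ℝ := (μ (qball d x₀ (A * r))).toReal with hMx
  set My : ℝ := (μ (qball d y₀ (A * r))).toReal with hMy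
  have hMx0 : 0 < Mx :=
    ENNReal.toReal_pos (hX.ball_pos x₀ _ hAr).ne' (hX.ball_ne_top x₀ _).ne
  have hMy0 : 0 < My :=
    ENNReal.toReal_pos (hX.ball_pos y₀ _ hAr).ne' (hX.ball_ne_top y₀ _).ne
  have cmpxR : Mx ≤ c * My := by
    have h1 : (μ (qball d x₀ (A * r))).toReal
        ≤ (ENNReal.ofReal c * μ (qball d y₀ (A * r))).toReal := by
      apply ENNReal.toReal_mono _ cmpx
      exact ENNReal.mul_ne_top ENNReal.ofReal_ne_top (hX.ball_ne_top y₀ _).ne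
    rwa [ENNReal.toReal_mul, ENNReal.toReal_ofReal hc0.le] at h1
  have cmpyR : My ≤ c * Mx := by
    have h1 : (μ (qball d y₀ (A * r))).toReal
        ≤ (ENNReal.ofReal c * μ (qball d x₀ (A * r))).toReal := by
      apply ENNReal.toReal_mono _ cmpy
      exact ENNReal.mul_ne_top ENNReal.ofReal_ne_top (hX.ball_ne_top x₀ _).ne
    rwa [ENNReal.toReal_mul, ENNReal.toReal_ofReal hc0.le] at h1
  have hxistar : ξ * Cμ * lam ^ Q = ξ * c := by rw [hc]; ring
  have hcE0 : ENNReal.ofReal c ≠ 0 := by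
    simp [ENNReal.ofReal_eq_zero, not_le, hc0]
  have hcETop : ENNReal.ofReal c ≠ ⊤ := ENNReal.ofReal_ne_top
  refine ⟨hadm.r_pos, ?_, hadm.A_ge, hadm.eps_pos, ?_, ?_, ?_, ?_, ?_, ?_, ?_⟩
  · -- 1 ≤ ξ*
    nlinarith
  · -- sep
    intro y hy x hx
    rw [hX.symm]
    exact hadm.sep x hx y hy
  · -- dist_lb
    rw [hX.symm]; exact hadm.dist_lb
  · -- dist_ub
    rw [hX.symm, hxistar]
    calc d x₀ y₀ ≤ ξ * A * r := hadm.dist_ub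
      _ ≤ ξ * c * A * r := by
          nlinarith [mul_nonneg (mul_nonneg (show (0:ℝ) ≤ ξ by linarith)
            (show (0:ℝ) ≤ c - 1 by linarith)) hAr.le]
  · -- K_ub
    show ‖K x₀ y₀‖ ≤ ξ * Cμ * lam ^ Q / Mx
    rw [hxistar]
    calc ‖K x₀ y₀‖ ≤ ξ / My := hadm.K_ub
      _ ≤ ξ * c / Mx := by
          rw [div_le_div_iff₀ hMy0 hMx0]
          nlinarith
  · -- K_lb
    show 1 / Mx ≤ ξ * Cμ * lam ^ Q * ‖K x₀ y₀‖
    rw [hxistar]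
    have h1 : 1 / My ≤ ξ * ‖K x₀ y₀‖ := hadm.K_lb
    have h2 : 1 / Mx ≤ c / My := by
      rw [div_le_div_iff₀ hMx0 hMy0]
      nlinarith
    calc 1 / Mx ≤ c / My := h2
      _ = c * (1 / My) := by ring
      _ ≤ c * (ξ * ‖K x₀ y₀‖) := by
          apply mul_le_mul_of_nonneg_left h1 hc0.le
      _ = ξ * c * ‖K x₀ y₀‖ := by ring
  · -- int_y (new): over ball at x₀, for x ∈ B(y₀, r)
    intro x hx
    have base := hadm.int_x x hx
    have hofReal : ENNReal.ofReal (ξ * Cμ * lam ^ Q * ε)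
        = ENNReal.ofReal c * ENNReal.ofReal (ξ * ε) := by
      rw [← ENNReal.ofReal_mul hc0.le]
      congr 1; ring
    calc ∫⁻ y in qball d x₀ r, ENNReal.ofReal (‖K y x - K x₀ y₀‖) ∂μ
        ≤ ENNReal.ofReal (ξ * ε) * μ (qball d x₀ r) / μ (qball d y₀ (A * r)) := base
      _ = ENNReal.ofReal c * (ENNReal.ofReal (ξ * ε) * μ (qball d x₀ r))
            / (ENNReal.ofReal c * μ (qball d y₀ (A * r))) := by
          rw [ENNReal.mul_div_mul_left _ _ hcE0 hcETop]
      _ ≤ ENNReal.ofReal c * (ENNReal.ofReal (ξ * ε) * μ (qball d x₀ r))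
            / μ (qball d x₀ (A * r)) :=
          ENNReal.div_le_div_left cmpx _
      _ = ENNReal.ofReal (ξ * Cμ * lam ^ Q * ε) * μ (qball d x₀ r)
            / μ (qball d x₀ (A * r)) := by
          rw [hofReal, mul_assoc]
  · -- int_x (new): over ball at y₀, for y ∈ B(x₀, r)
    intro y hy
    have base := hadm.int_y y hy
    have hofReal : ENNReal.ofReal (ξ * Cμ * lam ^ Q * ε)
        = ENNReal.ofReal c * ENNReal.ofReal (ξ * ε) := by
      rw [← ENNReal.ofReal_mul hc0.le]
      congr 1; ring
    calc ∫⁻ x in qball d y₀ r, ENNReal.ofReal (‖K y x - K x₀ y₀‖) ∂μ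
        ≤ ENNReal.ofReal (ξ * ε) * μ (qball d y₀ r) / μ (qball d y₀ (A * r)) := base
      _ = ENNReal.ofReal c * (ENNReal.ofReal (ξ * ε) * μ (qball d y₀ r))
            / (ENNReal.ofReal c * μ (qball d y₀ (A * r))) := by
          rw [ENNReal.mul_div_mul_left _ _ hcE0 hcETop]
      _ ≤ ENNReal.ofReal c * (ENNReal.ofReal (ξ * ε) * μ (qball d y₀ r))
            / μ (qball d x₀ (A * r)) :=
          ENNReal.div_le_div_left cmpx _
      _ = ENNReal.ofReal (ξ * Cμ * lam ^ Q * ε) * μ (qball d y₀ r)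
            / μ (qball d x₀ (A * r)) := by
          rw [hofReal, mul_assoc]
end
end
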